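/- Let r ≥ 2, let ρ > 4^(1/r), and set σ = (√(ρ^r) + √(ρ^r − 4))/2. Suppose (a_i)_{i=−1}^{ℓ} is a sequence of nonnegative reals with a_{−1} = 0, a_0 > 0, and a_i ≤ √(ρ^r)·a_{i−1} − a_{i−2} for i = 1, …, ℓ. Then a_ℓ ≤ a_0·(σ^{ℓ+1} − σ^{-(ℓ+1)})/(σ − σ^{-1}). -/
import Mathlib


theorem stmt_2 (r : ℕ) (hr : 2 ≤ r) (ρ : ℝ) (hρ : ρ > (4 : ℝ) ^ ((1 : ℝ) / r))
    (σ : ℝ) (hσ : σ = (Real.sqrt (ρ ^ r) + Real.sqrt (ρ ^ r - 4)) / 2)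
    (ℓ : ℕ) (a : ℤ → ℝ)
    (hnn : ∀ i : ℤ, -1 ≤ i → i ≤ ℓ → 0 ≤ a i)
    (hm1 : a (-1) = 0) (h0 : 0 < a 0)
    (hrec : ∀ i : ℤ, 1 ≤ i → i ≤ ℓ → a i ≤ Real.sqrt (ρ ^ r) * a (i - 1) - a (i - 2)) :
    a ℓ ≤ a 0 * (σ ^ (ℓ + 1) - σ ^ (-(ℓ + 1 : ℤ))) / (σ - σ⁻¹) := by
  set s := Real.sqrt (ρ ^ r) with hs
  set t := Real.sqrt (ρ ^ r - 4) with ht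
  have hrne : (r : ℝ) ≠ 0 := by positivity
  have h4 : (4 : ℝ) < ρ ^ r := by
    have h40 : (0:ℝ) ≤ (4:ℝ) ^ ((1:ℝ)/r) := le_of_lt (by positivity)
    have := pow_lt_pow_left₀ hρ h40 (by omega : r ≠ 0)
    calc (4:ℝ) = ((4:ℝ) ^ ((1:ℝ)/r)) ^ r := by
          rw [← Real.rpow_natCast ((4:ℝ) ^ ((1:ℝ)/r)) r, ← Real.rpow_mul (by norm_num)]
          rw [one_div, inv_mul_cancel₀ hrne, Real.rpow_one]
      _ < ρ ^ r := this
  have hρr0 : (0:ℝ) ≤ ρ ^ r := by linarith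
  have hs2 : s ^ 2 = ρ ^ r := Real.sq_sqrt hρr0
  have ht2 : t ^ 2 = ρ ^ r - 4 := Real.sq_sqrt (by linarith)
  have hsn : 0 ≤ s := Real.sqrt_nonneg _
  have hs_gt : 2 < s := by nlinarith
  have htpos : 0 < t := Real.sqrt_pos.mpr (by linarith)
  have hσ1 : 1 < σ := by rw [hσ]; linarith
  have hσpos : 0 < σ := by linarith
  have hσne : σ ≠ 0 := ne_of_gt hσpos
  have hinv : σ⁻¹ = (s - t) / 2 := by
    apply inv_eq_of_mul_eq_one_right
    rw [hσ]; nlinarith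
  have hsum : σ + σ⁻¹ = s := by rw [hinv, hσ]; ring
  have hdiff : σ - σ⁻¹ = t := by rw [hinv, hσ]; ring
  have htne : σ - σ⁻¹ ≠ 0 := by rw [hdiff]; exact ne_of_gt htpos
  have A : ∀ n : ℕ, (n : ℤ) ≤ ℓ → a n - σ * a ((n : ℤ) - 1) ≤ σ ^ (-(n : ℤ)) * a 0 := by
    intro n
    induction n with
    | zero => intro _; norm_num [hm1]
    | succ n ih =>
      intro h
      have hn : (n : ℤ) ≤ ℓ := by push_cast at h ⊢; omega
      have hr1 := hrec ((n : ℤ) + 1) (by omega) (by push_cast at h; omega)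
      have e1 : ((n : ℤ) + 1) - 1 = (n : ℤ) := by ring
      have e2 : ((n : ℤ) + 1) - 2 = (n : ℤ) - 1 := by ring
      rw [e1, e2] at hr1
      have hiv : σ⁻¹ > 0 := by positivity
      have key : a ((n : ℤ) + 1) - σ * a n ≤ σ⁻¹ * (a n - σ * a ((n : ℤ) - 1)) := by
        have hss : s - σ = σ⁻¹ := by linarith
        have h1 : σ⁻¹ * σ = 1 := inv_mul_cancel₀ hσne
        have hexp : σ⁻¹ * (a n - σ * a ((n : ℤ) - 1))
            = σ⁻¹ * a n - a ((n : ℤ) - 1) := by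
          rw [mul_sub, ← mul_assoc, h1, one_mul]
        have hexp2 : (s - σ) * a n = s * a n - σ * a n := by ring
        rw [hexp, ← hss, hexp2]
        linarith
      have := le_trans key (mul_le_mul_of_nonneg_left (ih hn) (le_of_lt hiv))
      calc a (((n : ℕ) + 1 : ℕ) : ℤ) - σ * a ((((n : ℕ) + 1 : ℕ) : ℤ) - 1)
          = a ((n : ℤ) + 1) - σ * a n := by push_cast; ring_nf
        _ ≤ σ⁻¹ * (σ ^ (-(n : ℤ)) * a 0) := this
        _ = σ ^ (-((n : ℤ) + 1)) * a 0 := by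
            rw [show -((n:ℤ)+1) = (-(n:ℤ)) + (-1) by ring, zpow_add₀ hσne, zpow_neg_one]
            ring
        _ = σ ^ (-(((n : ℕ) + 1 : ℕ) : ℤ)) * a 0 := by push_cast; ring_nf
  have B : ∀ n : ℕ, (n : ℤ) ≤ ℓ →
      a n ≤ a 0 * (σ ^ ((n : ℤ) + 1) - σ ^ (-((n : ℤ) + 1))) / (σ - σ⁻¹) := by
    intro n
    induction n with
    | zero =>
      intro _
      simp only [Nat.cast_zero, Int.cast_zero, zero_add, zpow_one]
      rw [show (-(1:ℤ)) = -1 from rfl, zpow_neg_one]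
      rw [mul_div_assoc, div_self htne, mul_one]
    | succ n ih =>
      intro h
      have hn : (n : ℤ) ≤ ℓ := by push_cast at h ⊢; omega
      have hA := A (n + 1) h
      have e1 : (((n : ℕ) + 1 : ℕ) : ℤ) - 1 = (n : ℤ) := by push_cast; ring
      rw [e1] at hA
      have step : a (((n : ℕ) + 1 : ℕ) : ℤ) ≤ σ * a n + σ ^ (-(((n:ℕ)+1:ℕ) : ℤ)) * a 0 := by
        linarith
      have ih' := mul_le_mul_of_nonneg_left (ih hn) (le_of_lt hσpos)
      have : a (((n : ℕ) + 1 : ℕ) : ℤ)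
          ≤ σ * (a 0 * (σ ^ ((n : ℤ) + 1) - σ ^ (-((n : ℤ) + 1))) / (σ - σ⁻¹))
            + σ ^ (-(((n:ℕ)+1:ℕ) : ℤ)) * a 0 := by linarith
      refine le_trans this (le_of_eq ?_)
      have c1 : ((((n:ℕ)+1:ℕ) : ℤ)) = (n : ℤ) + 1 := by push_cast; ring
      rw [c1]
      have hX : σ ^ ((n : ℤ) + 1 + 1) = σ * σ ^ ((n : ℤ) + 1) := by
        rw [show (n:ℤ)+1+1 = 1 + ((n:ℤ)+1) by ring, zpow_add₀ hσne, zpow_one]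
      have hY : σ ^ (-((n : ℤ) + 1 + 1)) = σ⁻¹ * σ ^ (-((n : ℤ) + 1)) := by
        rw [show -((n:ℤ)+1+1) = (-1) + (-((n:ℤ)+1)) by ring, zpow_add₀ hσne, zpow_neg_one]
      rw [hX, hY]
      have gen : ∀ x y c e : ℝ, e ≠ 0 →
          σ * (c * (x - y) / e) + y * c = c * (σ * x - (σ - e) * y) / e := by
        intro x y c e he
        field_simp
        ring
      have g2 := gen (σ ^ ((n : ℤ) + 1)) (σ ^ (-((n : ℤ) + 1))) (a 0) (σ - σ⁻¹) htne
      rw [show σ - (σ - σ⁻¹) = σ⁻¹ by ring] at g2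
      exact g2
  have := B ℓ le_rfl
  calc a (ℓ : ℤ) ≤ a 0 * (σ ^ ((ℓ : ℤ) + 1) - σ ^ (-((ℓ : ℤ) + 1))) / (σ - σ⁻¹) := this
    _ = a 0 * (σ ^ (ℓ + 1) - σ ^ (-(ℓ + 1 : ℤ))) / (σ - σ⁻¹) := by
        rw [show ((ℓ : ℤ) + 1) = ((ℓ + 1 : ℕ) : ℤ) by push_cast; ring, zpow_natCast]
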